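/- Let k be a non-negative integer, P a finite propositional logic program, and U a model of the theory T₀(P). For each q ∈ M(U) let i_q be the unique i with c(q,i) ∈ U, let i_U = max{i_q : q ∈ M(U)}, and for 1 ≤ i ≤ i_U let [M(U)]_i = {q ∈ M(U) : i_q = i}. Then [M(U)]_i ≠ ∅ for every i with 1 ≤ i ≤ i_U. -/
import Mathlib


open scoped Classical

noncomputable section

/-- A propositional logic program rule: a head atom, a finite positive body and a
finite negative body. -/
structure LPRule (α : Type) where
  head : α
  pos : Finset α
  neg : Finset α
deriving DecidableEq

/-- A logic program is a finite set of rules. -/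
abbrev LProgram (α : Type) := Finset (LPRule α)

variable {α : Type} [DecidableEq α]

/-- `horn r`: the Horn rule with the same head and positive body as `r`
and empty negative body. -/
def LPRule.horn (r : LPRule α) : LPRule α := ⟨r.head, r.pos, ∅⟩

/-- A rule `r` is proper if `h(r) ∉ b⁺(r)` and `b⁺(r) ∩ b⁻(r) = ∅`. -/
def LPRule.proper (r : LPRule α) : Prop := r.head ∉ r.pos ∧ r.pos ∩ r.neg = ∅

/-- `At(P)`: the set of atoms occurring in `P`. -/
def atomsP (P : LProgram α) : Finset α := P.sup (fun r => insert r.head (r.pos ∪ r.neg))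

/-- `h(P)`: the set of heads of rules of `P`. -/
def headsP (P : LProgram α) : Finset α := P.image LPRule.head

/-- `Neg(P)`: the set of atoms occurring negated in `P`. -/
def negP (P : LProgram α) : Finset α := P.sup LPRule.neg

/-- The least model of a (Horn) program `Q`, given as a set of rules (negative bodies
are ignored; Horn rules have empty negative bodies): the least set `M` of atoms such
that `h(r) ∈ M` whenever `r ∈ Q` and `b⁺(r) ⊆ M`. -/
def LM (Q : Set (LPRule α)) : Set α :=
  ⋂₀ {M : Set α | ∀ r ∈ Q, (↑r.pos : Set α) ⊆ M → r.head ∈ M}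

/-- The reduct `P^S`: delete every rule whose negative body meets `S` and remove the
negative bodies of the remaining rules. -/
def reduct (P : LProgram α) (S : Set α) : Set (LPRule α) :=
  LPRule.horn '' {r | r ∈ P ∧ (↑r.neg : Set α) ∩ S = ∅}

/-- `M` is a stable model of `P` if `M = LM (P^M)`. -/
def isStable (P : LProgram α) (M : Set α) : Prop :=
  M = LM (reduct P M)

/-- The propositional atoms of the encoding `T(P)`: for each program atom `q`,
atoms `c(q)`, `c(q,i)`, `c⁻(q,i)` and `d(q,i)`. -/
inductive EncAtom (α : Type) where
  | c : α → EncAtom α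
  | ci : α → ℕ → EncAtom α
  | cm : α → ℕ → EncAtom α
  | d : α → ℕ → EncAtom α
deriving DecidableEq

/-- `U` satisfies `F₁(q,i) = c⁻(q,i) ↔ (c(q,1) ∨ … ∨ c(q,i-1))`. -/
def SatF1 (U : Set (EncAtom α)) (q : α) (i : ℕ) : Prop :=
  EncAtom.cm q i ∈ U ↔ ∃ j, 1 ≤ j ∧ j ≤ i - 1 ∧ EncAtom.ci q j ∈ U

/-- `U` satisfies `F₂(q) = c(q) ↔ (c(q,1) ∨ … ∨ c(q,k+1))`. -/
def SatF2 (k : ℕ) (U : Set (EncAtom α)) (q : α) : Prop :=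
  EncAtom.c q ∈ U ↔ ∃ j, 1 ≤ j ∧ j ≤ k + 1 ∧ EncAtom.ci q j ∈ U

/-- `U` satisfies `F₃(r,i)`; for `i ≥ 2` this is
`c⁻(a₁,i) ∧ … ∧ c⁻(a_s,i) ∧ ¬c(b₁) ∧ … ∧ ¬c(b_t) ∧ ¬c⁻(q,i)`, for `i = 1` it is
`false` when `b⁺(r) ≠ ∅` and `¬c(b₁) ∧ … ∧ ¬c(b_t)` when `b⁺(r) = ∅`. -/
def SatF3 (U : Set (EncAtom α)) (r : LPRule α) (i : ℕ) : Prop :=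
  if i = 1 then r.pos = ∅ ∧ ∀ b ∈ r.neg, EncAtom.c b ∉ U
  else (∀ a ∈ r.pos, EncAtom.cm a i ∈ U) ∧ (∀ b ∈ r.neg, EncAtom.c b ∉ U) ∧
    EncAtom.cm r.head i ∉ U

/-- `U` satisfies `F₄(q,i) = c(q,i) ↔ (F₃(r₁,i) ∨ … ∨ F₃(r_v,i))`, where
`r₁,…,r_v` are all rules of `P` with head `q`. -/
def SatF4 (P : LProgram α) (U : Set (EncAtom α)) (q : α) (i : ℕ) : Prop :=
  EncAtom.ci q i ∈ U ↔ ∃ r ∈ P, r.head = q ∧ SatF3 U r i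

/-- `U` is a model of the theory `T₀(P)`. -/
def ModelT0 (k : ℕ) (P : LProgram α) (U : Set (EncAtom α)) : Prop :=
  (∀ q ∈ atomsP P, ∀ i, 2 ≤ i → i ≤ k + 1 → SatF1 U q i) ∧
  (∀ q ∈ atomsP P, SatF2 k U q) ∧
  (∀ q ∈ atomsP P, ∀ i, 1 ≤ i → i ≤ k + 1 → SatF4 P U q i)

/-- `M(U) = {q ∈ At(P) : c(q) ∈ U}`. -/
def MU (P : LProgram α) (U : Set (EncAtom α)) : Finset α :=
  (atomsP P).filter (fun q => EncAtom.c q ∈ U)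

lemma mem_atomsP_of_pos {P : LProgram α} {r : LPRule α} (hr : r ∈ P) {a : α}
    (ha : a ∈ r.pos) : a ∈ atomsP P := by
  have := Finset.le_sup (f := fun r : LPRule α => insert r.head (r.pos ∪ r.neg)) hr
  exact this (by simp [ha])

lemma ci_uniq {k : ℕ} {P : LProgram α} {U : Set (EncAtom α)} (hU : ModelT0 k P U)
    {q : α} (hq : q ∈ atomsP P) {m m' : ℕ}
    (h1 : 1 ≤ m) (h2 : m ≤ k+1) (h1' : 1 ≤ m') (h2' : m' ≤ k+1)
    (hm : EncAtom.ci q m ∈ U) (hm' : EncAtom.ci q m' ∈ U) : m = m' := by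
  have key : ∀ a b : ℕ, 1 ≤ a → b ≤ k+1 → a < b →
      EncAtom.ci q a ∈ U → EncAtom.ci q b ∈ U → False := by
    intro a b ha hb hab hca hcb
    have hcm : EncAtom.cm q b ∈ U := (hU.1 q hq b (by omega) hb).2 ⟨a, ha, by omega, hca⟩
    obtain ⟨r, _, hrh, hF3⟩ := (hU.2.2 q hq b (by omega) hb).1 hcb
    rw [SatF3, if_neg (by omega)] at hF3
    exact hF3.2.2 (hrh ▸ hcm)
  rcases lt_trichotomy m m' with h | h | h
  · exact absurd (key m m' h1 h2' h hm hm') (by simp)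
  · exact h
  · exact absurd (key m' m h1' h2 h hm' hm) (by simp)

/-- let `U` be a model of `T₀(P)` and, for `q ∈ M(U)`, let `iq q` be the
unique `i` with `1 ≤ i ≤ k+1` and `c(q,i) ∈ U`.  Then for every `i` with
`1 ≤ i ≤ i_U = max {iq q : q ∈ M(U)}`, the level set `[M(U)]_i = {q ∈ M(U) : iq q = i}`
is nonempty. -/
theorem level_sets_nonempty (k : ℕ) (P : LProgram α) (U : Set (EncAtom α))
    (hU : ModelT0 k P U) (iq : α → ℕ)
    (hiq : ∀ q ∈ MU P U, 1 ≤ iq q ∧ iq q ≤ k + 1 ∧ EncAtom.ci q (iq q) ∈ U) :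
    ∀ i, 1 ≤ i → (∃ q ∈ MU P U, i ≤ iq q) → ∃ q ∈ MU P U, iq q = i := by
  rintro i hi ⟨q0, hq0, hq0i⟩
  by_contra hno
  push_neg at hno
  set S := (MU P U).filter (fun q => i < iq q) with hS
  have hq0S : q0 ∈ S :=
    Finset.mem_filter.2 ⟨hq0, lt_of_le_of_ne hq0i (fun h => hno q0 hq0 h.symm)⟩
  obtain ⟨q, hqS, hmin⟩ := Finset.exists_min_image S iq ⟨q0, hq0S⟩
  obtain ⟨hqMU, hij⟩ := Finset.mem_filter.1 hqS
  have hqAt : q ∈ atomsP P := (Finset.mem_filter.1 hqMU).1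
  obtain ⟨hj1, hjk, hciqj⟩ := hiq q hqMU
  obtain ⟨r, hrP, hrh, hF3⟩ := (hU.2.2 q hqAt (iq q) hj1 hjk).1 hciqj
  rw [SatF3, if_neg (by omega)] at hF3
  obtain ⟨hpos, hneg, hcmq⟩ := hF3
  have hik : i ≤ k + 1 := by omega
  have hposlt : ∀ a ∈ r.pos, a ∈ MU P U ∧ 1 ≤ iq a ∧ iq a < i ∧
      EncAtom.ci a (iq a) ∈ U := by
    intro a ha
    have haAt : a ∈ atomsP P := mem_atomsP_of_pos hrP ha
    obtain ⟨j', hj'1, hj'le, hcia⟩ := (hU.1 a haAt (iq q) (by omega) hjk).1 (hpos a ha)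
    have haMU : a ∈ MU P U :=
      Finset.mem_filter.2 ⟨haAt, (hU.2.1 a haAt).2 ⟨j', hj'1, by omega, hcia⟩⟩
    obtain ⟨ha1, hak, hcia'⟩ := hiq a haMU
    have heq : iq a = j' := ci_uniq hU haAt ha1 hak hj'1 (by omega) hcia' hcia
    have hne : iq a ≠ i := hno a haMU
    have hni : ¬ i < iq a := by
      intro hlt
      have := hmin a (Finset.mem_filter.2 ⟨haMU, hlt⟩)
      omega
    exact ⟨haMU, ha1, by omega, hcia'⟩
  rcases Nat.lt_or_ge i 2 with h1 | h2
  · -- i = 1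
    have hposE : r.pos = ∅ := by
      by_contra hne
      obtain ⟨a, ha⟩ := Finset.nonempty_iff_ne_empty.2 hne
      obtain ⟨_, ha1, hlt, _⟩ := hposlt a ha
      omega
    have hF31 : SatF3 U r 1 := by
      rw [SatF3, if_pos rfl]; exact ⟨hposE, hneg⟩
    have hci1 : EncAtom.ci q 1 ∈ U :=
      (hU.2.2 q hqAt 1 le_rfl (by omega)).2 ⟨r, hrP, hrh, hF31⟩
    have := ci_uniq hU hqAt le_rfl (by omega) hj1 hjk hci1 hciqj
    omega
  · have hF3i : SatF3 U r i := by
      rw [SatF3, if_neg (by omega)]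
      refine ⟨?_, hneg, ?_⟩
      · intro a ha
        obtain ⟨haMU, ha1, hlt, hcia⟩ := hposlt a ha
        exact (hU.1 a (Finset.mem_filter.1 haMU).1 i h2 hik).2 ⟨iq a, ha1, by omega, hcia⟩
      · intro hcmi
        obtain ⟨j', hj'1, hj'le, hciq⟩ := (hU.1 q hqAt i h2 hik).1 (hrh ▸ hcmi)
        have := ci_uniq hU hqAt hj'1 (by omega) hj1 hjk hciq hciqj
        omega
    have hcii : EncAtom.ci q i ∈ U :=
      (hU.2.2 q hqAt i hi hik).2 ⟨r, hrP, hrh, hF3i⟩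
    have := ci_uniq hU hqAt hi hik hj1 hjk hcii hciqj
    omega
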